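/- Let H' = -∑_{i=1}^{L-1} (Jᵢ σᵢ^z σ_{i+1}^z + hᵢ σᵢ^x) on L qubits. Then the partial trace over sites 1,…,L-1 of exp(-βH') is a scalar multiple of the identity on site L, for every real β. -/

import Mathlib

open Matrix Complex

noncomputable section

/-- Pauli X matrix. -/
def σx : Matrix (Fin 2) (Fin 2) ℂ := !![0, 1; 1, 0]
/-- Pauli Y matrix. -/
def σy : Matrix (Fin 2) (Fin 2) ℂ := !![0, -Complex.I; Complex.I, 0]
/-- Pauli Z matrix. -/
def σz : Matrix (Fin 2) (Fin 2) ℂ := !![1, 0; 0, -1]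

/-- The one-site operator `P` acting on site `i` of a collection of qubits
indexed by `ι` (identity on all other sites). -/
def pauliAt {ι : Type} [Fintype ι] [DecidableEq ι] (i : ι)
    (P : Matrix (Fin 2) (Fin 2) ℂ) : Matrix (ι → Fin 2) (ι → Fin 2) ℂ :=
  fun v w => if ∀ j, j ≠ i → v j = w j then P (v i) (w i) else 0

/-- The tensor product `⨂ i, η i` of one-qubit operators, as a matrix on the
full Hilbert space of the qubits indexed by `ι`. -/
def tensorPauli {ι : Type} [Fintype ι] [DecidableEq ι]
    (η : ι → Matrix (Fin 2) (Fin 2) ℂ) : Matrix (ι → Fin 2) (ι → Fin 2) ℂ :=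
  fun v w => ∏ i, η i (v i) (w i)

/-- Partial trace over the sites satisfying `p`; the result is an operator on
the qubits at the remaining sites. -/
def traceOut {ι : Type} [Fintype ι] [DecidableEq ι] (p : ι → Prop) [DecidablePred p]
    (M : Matrix (ι → Fin 2) (ι → Fin 2) ℂ) :
    Matrix ({i // ¬ p i} → Fin 2) ({i // ¬ p i} → Fin 2) ℂ :=
  fun v w => ∑ u : {i : ι // p i} → Fin 2,
    M (fun i => if h : p i then u ⟨i, h⟩ else v ⟨i, h⟩)
      (fun i => if h : p i then u ⟨i, h⟩ else w ⟨i, h⟩)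

/-- The Hamiltonian `H' = -∑_{i=1}^{L-1} (Jᵢ σᵢ^z σ_{i+1}^z + hᵢ σᵢ^x)` on a
chain of `L + 1` qubits (sites `0, …, L`, with no field term on the last site). -/
def Hprime (L : ℕ) (J h : Fin L → ℝ) :
    Matrix (Fin (L + 1) → Fin 2) (Fin (L + 1) → Fin 2) ℂ :=
  -∑ i : Fin L, ((J i : ℂ) • (pauliAt i.castSucc σz * pauliAt i.succ σz)
      + (h i : ℂ) • pauliAt i.castSucc σx)

variable {ι : Type} [Fintype ι] [DecidableEq ι]

lemma tensorPauli_mul (η η' : ι → Matrix (Fin 2) (Fin 2) ℂ) :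
    tensorPauli η * tensorPauli η' = tensorPauli (fun i => η i * η' i) := by
  ext v w
  simp only [Matrix.mul_apply, tensorPauli, ← Finset.prod_mul_distrib]
  rw [Finset.prod_univ_sum, Fintype.piFinset_univ]

lemma tensorPauli_one : tensorPauli (fun _ : ι => (1 : Matrix (Fin 2) (Fin 2) ℂ)) = 1 := by
  ext v w
  by_cases h : v = w
  · subst h; simp [tensorPauli, Matrix.one_apply]
  · obtain ⟨i, hi⟩ := Function.ne_iff.mp h
    rw [tensorPauli, Finset.prod_eq_zero (Finset.mem_univ i) (by simp [Matrix.one_apply, hi]),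
      Matrix.one_apply_ne h]

lemma pauliAt_eq (i : ι) (P : Matrix (Fin 2) (Fin 2) ℂ) :
    pauliAt i P = tensorPauli (fun j => if j = i then P else 1) := by
  ext v w
  simp only [pauliAt, tensorPauli]
  by_cases h : ∀ j, j ≠ i → v j = w j
  · rw [if_pos h, Finset.prod_eq_single i (fun b _ hb => by
      simp [hb, Matrix.one_apply, h b hb]) (by simp)]
    simp
  · push_neg at h
    obtain ⟨j, hj, hvw⟩ := h
    rw [if_neg (by push_neg; exact ⟨j, hj, hvw⟩),
      Finset.prod_eq_zero (Finset.mem_univ j) (by simp [hj, Matrix.one_apply, hvw])]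

lemma tensorPauli_smul (c : ι → ℂ) (η : ι → Matrix (Fin 2) (Fin 2) ℂ) :
    tensorPauli (fun i => c i • η i) = (∏ i, c i) • tensorPauli η := by
  ext v w
  simp [tensorPauli, Finset.prod_mul_distrib]

lemma tensorPauli_comm (η η' : ι → Matrix (Fin 2) (Fin 2) ℂ)
    (h : ∀ i, Commute (η i) (η' i)) : Commute (tensorPauli η) (tensorPauli η') := by
  unfold Commute SemiconjBy
  rw [tensorPauli_mul, tensorPauli_mul]
  exact congrArg tensorPauli (funext h)

lemma sigma_xz : σx * σz = (-1 : ℂ) • (σz * σx) := by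
  ext i j
  fin_cases i <;> fin_cases j <;>
    simp [σx, σz, Matrix.mul_apply, Fin.sum_univ_two]

lemma sigma_xx : σx * σx = 1 := by
  ext i j
  fin_cases i <;> fin_cases j <;>
    simp [σx, Matrix.mul_apply, Fin.sum_univ_two, Matrix.one_apply]

/-- The global spin-flip operator. -/
def Uflip (ι : Type) [Fintype ι] [DecidableEq ι] : Matrix (ι → Fin 2) (ι → Fin 2) ℂ :=
  tensorPauli (fun _ => σx)

lemma Uflip_mul_pauliAt_z (a : ι) :
    Uflip ι * pauliAt a σz = -(pauliAt a σz * Uflip ι) := by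
  rw [pauliAt_eq, Uflip, tensorPauli_mul, tensorPauli_mul]
  have key : (fun j => σx * if j = a then σz else 1)
      = fun j => (if j = a then (-1 : ℂ) else 1) • ((if j = a then σz else 1) * σx) := by
    funext j
    split_ifs with hj
    · simpa using sigma_xz
    · simp
  rw [key, tensorPauli_smul, Finset.prod_ite_eq' Finset.univ a (fun _ => (-1 : ℂ))]
  simp

lemma Uflip_comm_pauliAt_x (a : ι) : Commute (Uflip ι) (pauliAt a σx) := by
  rw [pauliAt_eq, Uflip]
  refine tensorPauli_comm _ _ fun i => ?_
  split_ifs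
  · exact Commute.refl _
  · exact Commute.one_right _

lemma Uflip_comm_zz (a b : ι) :
    Commute (Uflip ι) (pauliAt a σz * pauliAt b σz) := by
  unfold Commute SemiconjBy
  calc Uflip ι * (pauliAt a σz * pauliAt b σz)
      = (Uflip ι * pauliAt a σz) * pauliAt b σz := by rw [mul_assoc]
    _ = -((pauliAt a σz) * (Uflip ι * pauliAt b σz)) := by
        rw [Uflip_mul_pauliAt_z]; rw [neg_mul, mul_assoc]
    _ = pauliAt a σz * (pauliAt b σz * Uflip ι) := by rw [Uflip_mul_pauliAt_z]; simp
    _ = pauliAt a σz * pauliAt b σz * Uflip ι := by rw [mul_assoc]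

lemma Uflip_mul_Uflip : Uflip ι * Uflip ι = 1 := by
  rw [Uflip, tensorPauli_mul]
  simp only [sigma_xx]
  exact tensorPauli_one

def zval : Fin 2 → ℂ := ![1, -1]
def flip2 : Fin 2 → Fin 2 := ![1, 0]

lemma flip2_flip2 (x : Fin 2) : flip2 (flip2 x) = x := by fin_cases x <;> rfl

lemma sigma_z_apply (x y : Fin 2) : σz x y = if y = x then zval x else 0 := by
  fin_cases x <;> fin_cases y <;> simp [σz, zval]

lemma sigma_x_apply (x y : Fin 2) : σx x y = if y = flip2 x then 1 else 0 := by
  fin_cases x <;> fin_cases y <;> simp [σx, flip2]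

lemma zval_ne {x y : Fin 2} (h : x ≠ y) : zval x ≠ zval y := by
  fin_cases x <;> fin_cases y <;> simp_all [zval]
  · norm_num
  · norm_num

lemma pauliAt_z_apply (a : ι) (v u : ι → Fin 2) :
    pauliAt a σz v u = if u = v then zval (v a) else 0 := by
  rw [pauliAt]
  by_cases h : u = v
  · subst h
    rw [if_pos (fun j _ => rfl), if_pos rfl, sigma_z_apply, if_pos rfl]
  · rw [if_neg h]
    by_cases h2 : ∀ j, j ≠ a → v j = u j
    · rw [if_pos h2, sigma_z_apply, if_neg]
      intro hua
      apply h
      funext j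
      by_cases hj : j = a
      · subst hj; exact hua
      · exact (h2 j hj).symm
    · rw [if_neg h2]

lemma pauliAt_z_mul_apply (a : ι) (M : Matrix (ι → Fin 2) (ι → Fin 2) ℂ) (v w : ι → Fin 2) :
    (pauliAt a σz * M) v w = zval (v a) * M v w := by
  rw [Matrix.mul_apply, Finset.sum_eq_single v
    (fun u _ hu => by rw [pauliAt_z_apply, if_neg hu, zero_mul]) (by simp)]
  rw [pauliAt_z_apply, if_pos rfl]

lemma mul_pauliAt_z_apply (a : ι) (M : Matrix (ι → Fin 2) (ι → Fin 2) ℂ) (v w : ι → Fin 2) :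
    (M * pauliAt a σz) v w = M v w * zval (w a) := by
  rw [Matrix.mul_apply, Finset.sum_eq_single w
    (fun u _ hu => by rw [pauliAt_z_apply, if_neg (fun hh => hu hh.symm), mul_zero]) (by simp)]
  rw [pauliAt_z_apply, if_pos rfl]

lemma Uflip_apply (v u : ι → Fin 2) :
    Uflip ι v u = if u = flip2 ∘ v then 1 else 0 := by
  rw [Uflip, tensorPauli]
  by_cases h : u = flip2 ∘ v
  · rw [if_pos h]
    subst h
    refine Finset.prod_eq_one fun i _ => ?_
    rw [sigma_x_apply]
    simp [Function.comp]
  · rw [if_neg h]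
    obtain ⟨i, hi⟩ := Function.ne_iff.mp h
    refine Finset.prod_eq_zero (Finset.mem_univ i) ?_
    rw [sigma_x_apply, if_neg (by simpa [Function.comp] using hi)]

lemma Uflip_mul_apply (M : Matrix (ι → Fin 2) (ι → Fin 2) ℂ) (v w : ι → Fin 2) :
    (Uflip ι * M) v w = M (flip2 ∘ v) w := by
  rw [Matrix.mul_apply, Finset.sum_eq_single (flip2 ∘ v)
    (fun u _ hu => by rw [Uflip_apply, if_neg hu, zero_mul])
    (by simp)]
  rw [Uflip_apply, if_pos rfl, one_mul]

lemma mul_Uflip_apply (M : Matrix (ι → Fin 2) (ι → Fin 2) ℂ) (v w : ι → Fin 2) :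
    (M * Uflip ι) v w = M v (flip2 ∘ w) := by
  have hiff : ∀ u : ι → Fin 2, w = flip2 ∘ u ↔ u = flip2 ∘ w := by
    intro u
    constructor <;> intro hh <;> funext i <;> have h2 := congrFun hh i <;>
      simp only [Function.comp] at h2 ⊢ <;> rw [h2, flip2_flip2]
  rw [Matrix.mul_apply, Finset.sum_eq_single (flip2 ∘ w)
    (fun u _ hu => by rw [Uflip_apply, if_neg (fun hh => hu ((hiff u).mp hh)), mul_zero])
    (by simp)]
  rw [Uflip_apply, if_pos ((hiff (flip2 ∘ w)).mpr rfl), mul_one]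

lemma comm_zz (a b : Fin (L + 1)) : Commute (pauliAt a σz) (pauliAt b σz) := by
  rw [pauliAt_eq, pauliAt_eq]
  refine tensorPauli_comm _ _ fun i => ?_
  split_ifs <;>
    first
    | exact Commute.refl _
    | exact Commute.one_right _
    | exact Commute.one_left _

lemma comm_z_x {a b : Fin (L + 1)} (hab : a ≠ b) :
    Commute (pauliAt a σz) (pauliAt b σx) := by
  rw [pauliAt_eq, pauliAt_eq]
  refine tensorPauli_comm _ _ fun i => ?_
  split_ifs with h1 h2
  · exact absurd (h1 ▸ h2 : a = b) hab
  · exact Commute.one_right _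
  · exact Commute.one_left _
  · exact Commute.one_left _

lemma comm_z_Hprime (L : ℕ) (J h : Fin L → ℝ) :
    Commute (pauliAt (Fin.last L) σz) (Hprime L J h) := by
  rw [Hprime]
  refine Commute.neg_right ?_
  refine Commute.sum_right _ _ _ fun i _ => ?_
  refine Commute.add_right ?_ ?_
  · exact Commute.smul_right ((comm_zz _ _).mul_right (comm_zz _ _)) _
  · exact Commute.smul_right (comm_z_x (Fin.castSucc_lt_last i).ne') _

lemma comm_U_Hprime (L : ℕ) (J h : Fin L → ℝ) :
    Commute (Uflip (Fin (L + 1))) (Hprime L J h) := by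
  rw [Hprime]
  refine Commute.neg_right ?_
  refine Commute.sum_right _ _ _ fun i _ => ?_
  refine Commute.add_right ?_ ?_
  · exact Commute.smul_right (Uflip_comm_zz _ _) _
  · exact Commute.smul_right (Uflip_comm_pauliAt_x _) _

def flipEquiv : Fin 2 ≃ Fin 2 := ⟨flip2, flip2, flip2_flip2, flip2_flip2⟩

theorem traceOut_exp_Hprime_smul_one (L : ℕ) (J h : Fin L → ℝ) (β : ℝ) :
    ∃ c : ℂ, traceOut (fun i : Fin (L + 1) => i ≠ Fin.last L)
        (NormedSpace.exp ((-(β : ℂ)) • Hprime L J h)) =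
      c • (1 : Matrix ({i : Fin (L + 1) // ¬ i ≠ Fin.last L} → Fin 2)
        ({i : Fin (L + 1) // ¬ i ≠ Fin.last L} → Fin 2) ℂ) := by
  classical
  set M := NormedSpace.exp ((-(β : ℂ)) • Hprime L J h) with hMdef
  have hcz : Commute (pauliAt (Fin.last L) σz) M :=
    ((comm_z_Hprime L J h).smul_right _).exp_right
  have hcU : Commute (Uflip (Fin (L + 1))) M :=
    ((comm_U_Hprime L J h).smul_right _).exp_right
  have key1 : ∀ v w : Fin (L + 1) → Fin 2, v (Fin.last L) ≠ w (Fin.last L) → M v w = 0 := by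
    intro v w hvw
    have h1 : (pauliAt (Fin.last L) σz * M) v w = (M * pauliAt (Fin.last L) σz) v w := by
      rw [hcz.eq]
    rw [pauliAt_z_mul_apply, mul_pauliAt_z_apply] at h1
    by_contra hm
    exact zval_ne hvw (mul_left_cancel₀ hm (by rw [mul_comm (M v w), h1]))
  have key2 : ∀ v w : Fin (L + 1) → Fin 2, M (flip2 ∘ v) (flip2 ∘ w) = M v w := by
    intro v w
    have h1 : (Uflip (Fin (L + 1)) * M) v (flip2 ∘ w) = (M * Uflip (Fin (L + 1))) v (flip2 ∘ w) := by rw [hcU.eq]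
    rw [Uflip_mul_apply, mul_Uflip_apply] at h1
    rw [h1]
    congr 1
    funext i
    exact flip2_flip2 _
  set p : Fin (L + 1) → Prop := fun i => i ≠ Fin.last L with hp
  have hnp : ¬ p (Fin.last L) := not_ne_iff.mpr rfl
  have hS : ∀ j : {i // ¬ p i}, j = ⟨Fin.last L, hnp⟩ := fun j => Subtype.ext (not_not.mp j.2)
  set e : {i // ¬ p i} := ⟨Fin.last L, hnp⟩ with he
  refine ⟨traceOut p M (fun _ => 0) (fun _ => 0), ?_⟩
  ext v w
  rw [Matrix.smul_apply, Matrix.one_apply]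
  by_cases hvw : v = w
  · subst hvw
    rw [if_pos rfl, smul_eq_mul, mul_one]
    have hve : v = fun _ => v e := funext fun j => by rw [hS j]
    have h01 : v e = 0 ∨ v e = 1 := by
      have h2 : (v e).val = 0 ∨ (v e).val = 1 := by omega
      rcases h2 with hh | hh
      · exact Or.inl (Fin.ext hh)
      · exact Or.inr (Fin.ext hh)
    rcases h01 with h0 | h1
    · rw [hve, h0]
    · rw [hve, h1]
      rw [traceOut, traceOut]
      refine Fintype.sum_equiv (Equiv.piCongrRight fun _ => flipEquiv) _ _ fun u => ?_
      have harg : (fun i => if hh : p i then (Equiv.piCongrRight fun _ => flipEquiv) u ⟨i, hh⟩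
            else (0 : Fin 2))
          = flip2 ∘ fun i => if hh : p i then u ⟨i, hh⟩ else 1 := by
        funext i
        by_cases hh : p i
        · simp only [dif_pos hh, Function.comp_apply]
          rfl
        · simp only [dif_neg hh, Function.comp_apply]
          rfl
      rw [harg, key2]
  · rw [if_neg hvw, smul_eq_mul, mul_zero, traceOut]
    refine Finset.sum_eq_zero fun u _ => ?_
    refine key1 _ _ ?_
    simp only [dif_neg (show ¬ (Fin.last L ≠ Fin.last L) from hnp)]
    intro heq
    exact hvw (funext fun j => by rw [hS j]; exact heq)
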